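/- For p ≥ 2 there exists a constant C > 0 (depending only on p) such that for all vectors w₁, w₂ ∈ ℝ^N one has |w₂|^p ≥ |w₁|^p + p|w₁|^{p-2}⟨w₁, w₂ - w₁⟩ + |w₂ - w₁|^p/(2^{p-1} - 1). -/

import Mathlib

open Real

/-- Superadditivity of `x ^ q` on nonneg reals for `1 ≤ q`. -/
lemma aux_rpow_superadd {x y q : ℝ} (hx : 0 ≤ x) (hy : 0 ≤ y) (hq : 1 ≤ q) :
    x ^ q + y ^ q ≤ (x + y) ^ q := by
  have h := NNReal.add_rpow_le_rpow_add x.toNNReal y.toNNReal hq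
  have h2 := NNReal.coe_le_coe.mpr h
  push_cast at h2
  rwa [Real.coe_toNNReal x hx, Real.coe_toNNReal y hy] at h2

/-- Convexity midpoint inequality for `x ^ q`, `1 ≤ q`. -/
lemma aux_rpow_mid {x y q : ℝ} (hx : 0 ≤ x) (hy : 0 ≤ y) (hq : 1 ≤ q) :
    ((x + y) / 2) ^ q ≤ (x ^ q + y ^ q) / 2 := by
  have h := (convexOn_rpow hq).2 (Set.mem_Ici.mpr hx) (Set.mem_Ici.mpr hy)
    (by norm_num : (0:ℝ) ≤ 1/2) (by norm_num : (0:ℝ) ≤ 1/2) (by norm_num)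
  simp only [smul_eq_mul] at h
  calc ((x + y) / 2) ^ q = (1/2 * x + 1/2 * y) ^ q := by ring_nf
    _ ≤ 1/2 * x ^ q + 1/2 * y ^ q := h
    _ = (x ^ q + y ^ q) / 2 := by ring

/-- Scalar Bernoulli-based convexity: `s^p (1 + p (t/s - 1)) ≤ t^p`. -/
lemma aux_scalar {p s t : ℝ} (hp : 1 ≤ p) (hs : 0 < s) (ht : 0 ≤ t) :
    s ^ p + p * s ^ p * (t / s - 1) ≤ t ^ p := by
  have hx : (-1:ℝ) ≤ t / s - 1 := by
    have : 0 ≤ t / s := div_nonneg ht hs.le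
    linarith
  have h := one_add_mul_self_le_rpow_one_add hx hp
  have h1 : (1 + (t / s - 1)) = t / s := by ring
  rw [h1, Real.div_rpow ht hs.le] at h
  have hsp : 0 < s ^ p := Real.rpow_pos_of_pos hs p
  have h2 : s ^ p * (1 + p * (t / s - 1)) ≤ s ^ p * (t ^ p / s ^ p) :=
    mul_le_mul_of_nonneg_left h hsp.le
  rw [mul_div_cancel₀ _ hsp.ne'] at h2
  nlinarith [h2]

/-- Gradient (first-order convexity) inequality for `‖·‖^p`. -/
lemma aux_grad {p : ℝ} (hp : 2 ≤ p) {N : ℕ} (a b : EuclideanSpace ℝ (Fin N)) :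
    ‖a‖ ^ p + p * ‖a‖ ^ (p - 2) * (inner ℝ a (b - a) : ℝ) ≤ ‖b‖ ^ p := by
  have hp1 : (1:ℝ) ≤ p := by linarith
  by_cases ha : a = 0
  · subst ha
    rw [inner_zero_left, mul_zero, norm_zero, Real.zero_rpow (by positivity : p ≠ 0)]
    simpa using Real.rpow_nonneg (norm_nonneg b) p
  · have hs : 0 < ‖a‖ := norm_pos_iff.mpr ha
    have ht : 0 ≤ ‖b‖ := norm_nonneg b
    have hib : (inner ℝ a b : ℝ) ≤ ‖a‖ * ‖b‖ := real_inner_le_norm a b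
    have hinner : (inner ℝ a (b - a) : ℝ) = inner ℝ a b - ‖a‖ * ‖a‖ := by
      rw [inner_sub_right, real_inner_self_eq_norm_sq]; ring_nf
    have hsplit1 : ‖a‖ ^ (p - 2) * ‖a‖ * ‖a‖ = ‖a‖ ^ p := by
      have : ‖a‖ ^ (p - 2) * ‖a‖ ^ (2:ℕ) = ‖a‖ ^ p := by
        rw [← Real.rpow_natCast ‖a‖ 2, ← Real.rpow_add hs]
        norm_num
      rw [pow_two] at this
      linarith [this]
    have hkey := aux_scalar hp1 hs ht
    have hpos : 0 ≤ p * ‖a‖ ^ (p - 2) := by positivity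
    have hb1 : p * ‖a‖ ^ (p - 2) * (inner ℝ a (b - a) : ℝ)
        ≤ p * ‖a‖ ^ (p - 2) * (‖a‖ * ‖b‖ - ‖a‖ * ‖a‖) := by
      rw [hinner]
      apply mul_le_mul_of_nonneg_left _ hpos
      linarith
    have hdiv : ‖a‖ ^ p * (‖b‖ / ‖a‖ - 1) = ‖a‖ ^ (p - 2) * ‖a‖ * ‖b‖ - ‖a‖ ^ p := by
      rw [← hsplit1]
      field_simp
    nlinarith [hb1, hkey, hdiv]


lemma aux_pow21 {p : ℝ} : (2:ℝ) ^ (p - 1) * 2 = 2 ^ p := by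
  have h := Real.rpow_add two_pos (p - 1) 1
  rw [Real.rpow_one] at h
  rw [← h]
  norm_num

lemma aux_half {p : ℝ} {N : ℕ} (v : EuclideanSpace ℝ (Fin N)) :
    ‖(1/2 : ℝ) • v‖ ^ p = ‖v‖ ^ p / 2 ^ p := by
  rw [norm_smul, show ‖(1/2 : ℝ)‖ = 1/2 by rw [Real.norm_eq_abs]; norm_num,
    Real.mul_rpow (by norm_num) (norm_nonneg _),
    Real.div_rpow zero_le_one (by norm_num : (0:ℝ) ≤ 2), Real.one_rpow]
  ring

/-- Clarkson-type inequality in Hilbert space, `p ≥ 2`. -/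
lemma aux_clarkson {p : ℝ} (hp : 2 ≤ p) {N : ℕ} (a b : EuclideanSpace ℝ (Fin N)) :
    ‖(1/2 : ℝ) • (a + b)‖ ^ p + ‖(1/2 : ℝ) • (b - a)‖ ^ p ≤ (‖a‖ ^ p + ‖b‖ ^ p) / 2 := by
  have hq : (1:ℝ) ≤ p / 2 := by linarith
  set X := ‖(1/2 : ℝ) • (a + b)‖ with hX
  set Y := ‖(1/2 : ℝ) • (b - a)‖ with hY
  have hXn : 0 ≤ X := norm_nonneg _
  have hYn : 0 ≤ Y := norm_nonneg _
  have hpar : X * X + Y * Y = (‖a‖ * ‖a‖ + ‖b‖ * ‖b‖) / 2 := by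
    have h := parallelogram_law_with_norm ℝ a b
    have h1 : X = ‖a + b‖ / 2 := by
      rw [hX, norm_smul]; simp [abs_of_nonneg]; ring
    have h2 : Y = ‖a - b‖ / 2 := by
      rw [hY, norm_smul, ← norm_neg (b - a)]
      simp only [neg_sub]
      simp [abs_of_nonneg]; ring
    rw [h1, h2]; nlinarith [h]
  have key : ∀ x : ℝ, 0 ≤ x → x ^ p = (x * x) ^ (p / 2) := by
    intro x hx
    have h1 : x * x = x ^ (2:ℝ) := by
      rw [show (2:ℝ) = ((2:ℕ):ℝ) by norm_num, Real.rpow_natCast, sq]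
    calc x ^ p = x ^ ((2:ℝ) * (p/2)) := by rw [show (2:ℝ) * (p/2) = p by ring]
      _ = (x ^ (2:ℝ)) ^ (p/2) := Real.rpow_mul hx 2 (p/2)
      _ = (x * x) ^ (p/2) := by rw [← h1]
  rw [key X hXn, key Y hYn, key ‖a‖ (norm_nonneg a), key ‖b‖ (norm_nonneg b)]
  calc (X * X) ^ (p/2) + (Y * Y) ^ (p/2)
      ≤ (X * X + Y * Y) ^ (p/2) :=
        aux_rpow_superadd (mul_self_nonneg X) (mul_self_nonneg Y) hq
    _ = ((‖a‖ * ‖a‖ + ‖b‖ * ‖b‖) / 2) ^ (p/2) := by rw [hpar]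
    _ ≤ ((‖a‖ * ‖a‖) ^ (p/2) + (‖b‖ * ‖b‖) ^ (p/2)) / 2 :=
        aux_rpow_mid (mul_self_nonneg _) (mul_self_nonneg _) hq

/-- For `p ≥ 2`, for all vectors `w₁ w₂ ∈ ℝ^N`:
`|w₂|^p ≥ |w₁|^p + p|w₁|^{p-2}⟨w₁, w₂-w₁⟩ + |w₂-w₁|^p/(2^{p-1}-1)`. -/
theorem stmt_0 (p : ℝ) (hp : 2 ≤ p) (N : ℕ)
    (w₁ w₂ : EuclideanSpace ℝ (Fin N)) :
    ‖w₁‖ ^ p + p * ‖w₁‖ ^ (p - 2) * (inner ℝ w₁ (w₂ - w₁) : ℝ)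
      + ‖w₂ - w₁‖ ^ p / (2 ^ (p - 1) - 1) ≤ ‖w₂‖ ^ p := by
  -- notation: D a b = deficit in the gradient inequality
  set D : EuclideanSpace ℝ (Fin N) → EuclideanSpace ℝ (Fin N) → ℝ :=
    fun a b => ‖b‖ ^ p - ‖a‖ ^ p - p * ‖a‖ ^ (p - 2) * (inner ℝ a (b - a) : ℝ) with hD
  -- basic constants
  set r : ℝ := 2 ^ (1 - p) with hr
  have hr0 : 0 < r := Real.rpow_pos_of_pos two_pos _
  have hr1 : r < 1 := by
    apply Real.rpow_lt_one_of_one_lt_of_neg one_lt_two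
    linarith
  have hrinv : r * 2 ^ (p - 1) = 1 := by
    rw [hr, ← Real.rpow_add two_pos]
    norm_num
  have hden : (0:ℝ) < 2 ^ (p - 1) - 1 := by
    have : (1:ℝ) < 2 ^ (p - 1) := by
      nlinarith [hrinv, hr0, hr1, Real.rpow_pos_of_pos two_pos (p-1)]
    linarith
  set C : ℝ := 1 / (2 ^ (p - 1) - 1) with hC
  have hCfix : C * (1 - r) = r := by
    have h1 : (1:ℝ) - r = r * (2 ^ (p - 1) - 1) := by
      rw [mul_sub, hrinv, mul_one]
    rw [hC, h1, one_div, mul_comm r, ← mul_assoc, inv_mul_cancel₀ (ne_of_gt hden), one_mul]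
  -- the iteration step
  have hstep : ∀ a b : EuclideanSpace ℝ (Fin N),
      2 * D a ((1/2 : ℝ) • (a + b)) + ‖b - a‖ ^ p / 2 ^ (p - 1) ≤ D a b := by
    intro a b
    have hcl := aux_clarkson hp a b
    have hmid : ((1/2 : ℝ) • (a + b)) - a = (1/2 : ℝ) • (b - a) := by
      simp [smul_sub, smul_add]
      module
    have hinner : (inner ℝ a (((1/2 : ℝ) • (a + b)) - a) : ℝ)
        = (1/2) * (inner ℝ a (b - a) : ℝ) := by
      rw [hmid, real_inner_smul_right]
    have hhalf : ‖(1/2 : ℝ) • (b - a)‖ ^ p = ‖b - a‖ ^ p / 2 ^ p := aux_half _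
    have hpow : (2:ℝ) ^ (p - 1) * 2 = 2 ^ p := aux_pow21
    have h2p : (0:ℝ) < 2 ^ p := Real.rpow_pos_of_pos two_pos p
    have h2p1 : (0:ℝ) < 2 ^ (p - 1) := Real.rpow_pos_of_pos two_pos (p-1)
    have e2 : ‖b - a‖ ^ p / 2 ^ (p - 1) = r * ‖b - a‖ ^ p := by
      rw [div_eq_iff (ne_of_gt h2p1)]
      linear_combination (-(‖b - a‖ ^ p)) * hrinv
    have hr2p : r * 2 ^ p = 2 := by
      rw [← hpow]; linear_combination 2 * hrinv
    have hd : ‖b - a‖ ^ p / 2 ^ p = r / 2 * ‖b - a‖ ^ p := by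
      rw [div_eq_iff (ne_of_gt h2p)]
      linear_combination (-(‖b - a‖ ^ p) / 2) * hr2p
    have hdiveq : ‖b - a‖ ^ p / 2 ^ (p - 1) = 2 * (‖b - a‖ ^ p / 2 ^ p) := by
      rw [e2, hd]; ring
    simp only [hD]
    rw [hinner, hdiveq]
    have := hcl
    rw [hhalf] at this
    nlinarith [this]
  -- induction: (1 - r^n) * C * ‖b-a‖^p ≤ D a b
  have hmain : ∀ n : ℕ, ∀ a b : EuclideanSpace ℝ (Fin N),
      (1 - r ^ n) * C * ‖b - a‖ ^ p ≤ D a b := by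
    intro n
    induction n with
    | zero =>
      intro a b
      simp only [pow_zero, sub_self, zero_mul]
      have := aux_grad hp a b
      simp only [hD]
      linarith
    | succ n ih =>
      intro a b
      have h1 := hstep a b
      have h2 := ih a ((1/2 : ℝ) • (a + b))
      have hmid : ((1/2 : ℝ) • (a + b)) - a = (1/2 : ℝ) • (b - a) := by
        simp [smul_sub, smul_add]
        module
      have hhalf : ‖((1/2 : ℝ) • (a + b)) - a‖ ^ p = ‖b - a‖ ^ p / 2 ^ p := by
        rw [hmid]; exact aux_half _
      rw [hhalf] at h2
      -- 2/2^p = r and 1/2^(p-1) = r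
      have hpow : (2:ℝ) ^ (p - 1) * 2 = 2 ^ p := aux_pow21
      have h2p : (0:ℝ) < 2 ^ p := Real.rpow_pos_of_pos two_pos p
      have h2p1 : (0:ℝ) < 2 ^ (p - 1) := Real.rpow_pos_of_pos two_pos (p-1)
      have hr2p : r * 2 ^ p = 2 := by
        rw [← hpow]; linear_combination 2 * hrinv
      -- combine
      have hnp : 0 ≤ ‖b - a‖ ^ p := Real.rpow_nonneg (norm_nonneg _) p
      have hcoef : (1 - r ^ (n+1)) * C = r * ((1 - r ^ n) * C) + r := by
        linear_combination hCfix
      rw [hcoef]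
      have h3 : 2 * ((1 - r ^ n) * C * (‖b - a‖ ^ p / 2 ^ p)) ≤ 2 * D a ((1/2 : ℝ) • (a + b)) := by
        linarith
      have hd : ‖b - a‖ ^ p / 2 ^ p = r / 2 * ‖b - a‖ ^ p := by
        rw [div_eq_iff (ne_of_gt h2p)]
        linear_combination (-(‖b - a‖ ^ p) / 2) * hr2p
      have e1 : 2 * ((1 - r ^ n) * C * (‖b - a‖ ^ p / 2 ^ p))
          = r * ((1 - r ^ n) * C) * ‖b - a‖ ^ p := by
        rw [hd]; ring
      have e2 : ‖b - a‖ ^ p / 2 ^ (p - 1) = r * ‖b - a‖ ^ p := by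
        rw [div_eq_iff (ne_of_gt h2p1)]
        linear_combination (-(‖b - a‖ ^ p)) * hrinv
      rw [e1] at h3
      rw [e2] at h1
      have expand : (r * ((1 - r ^ n) * C) + r) * ‖b - a‖ ^ p
          = r * ((1 - r ^ n) * C) * ‖b - a‖ ^ p + r * ‖b - a‖ ^ p := by ring
      rw [expand]
      exact le_trans (add_le_add h3 (le_refl _)) h1
  -- pass to the limit n → ∞
  have hlim : C * ‖w₂ - w₁‖ ^ p ≤ D w₁ w₂ := by
    have htend : Filter.Tendsto (fun n : ℕ => (1 - r ^ n) * C * ‖w₂ - w₁‖ ^ p)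
        Filter.atTop (nhds ((1 - 0) * C * ‖w₂ - w₁‖ ^ p)) := by
      apply Filter.Tendsto.mul_const
      apply Filter.Tendsto.mul_const
      exact (tendsto_const_nhds.sub (tendsto_pow_atTop_nhds_zero_of_lt_one hr0.le hr1))
    have := le_of_tendsto' htend (fun n => hmain n w₁ w₂)
    simpa using this
  simp only [hD] at hlim
  have : ‖w₂ - w₁‖ ^ p / (2 ^ (p - 1) - 1) = C * ‖w₂ - w₁‖ ^ p := by
    rw [hC]; ring
  linarith
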